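/- Let G be a group and w a word such that w{G} is finite. For n ≥ 2, write W_i = [w(G), G, ⁽ⁱ⁾..., G]. If W_n is finite, then W_{n-1} is finite. -/

import Mathlib

def wordValues {k : ℕ} (w : FreeGroup (Fin k)) (G : Type*) [Group G] : Set G :=
  Set.range fun g : Fin k → G => FreeGroup.lift g w

/-- Iterated commutator: `iterComm H 0 = H`, `iterComm H (n+1) = ⁅iterComm H n, G⁆`. -/
def iterComm {G : Type*} [Group G] (H : Subgroup G) : ℕ → Subgroup G
  | 0 => H
  | n + 1 => ⁅iterComm H n, (⊤ : Subgroup G)⁆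

open scoped commutatorElement

namespace IterCommAux

open Subgroup

variable {G : Type*} [Group G]

lemma conj_center {h : G} (hz : h ∈ center G) (g : G) : g * h * g⁻¹ = h := by
  rw [mem_center_iff.mp hz g, mul_inv_cancel_right]

lemma normal_of_le_center {H : Subgroup G} (hle : H ≤ center G) : H.Normal := by
  constructor
  intro h hh g
  rw [conj_center (hle hh) g]
  exact hh

lemma isOfFinOrder_of_pow_eq {u : G} {i j : ℕ} (hij : i < j) (h : u ^ i = u ^ j) :
    IsOfFinOrder u := by
  apply isOfFinOrder_iff_pow_eq_one.mpr
  refine ⟨j - i, by omega, ?_⟩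
  have h2 : u ^ (j - i) * u ^ i = u ^ j := by
    rw [← pow_add]; congr 1; omega
  rw [← h] at h2
  have h3 : u ^ (j - i) * u ^ i = 1 * u ^ i := by rw [h2, one_mul]
  exact mul_right_cancel h3

lemma closure_normal_of_conj {S : Set G} (hconj : ∀ s ∈ S, ∀ g : G, g * s * g⁻¹ ∈ S) :
    (Subgroup.closure S).Normal := by
  constructor
  intro a ha g
  induction ha using closure_induction with
  | mem x hx => exact subset_closure (hconj x hx g)
  | one => simpa using one_mem (closure S)
  | mul x y hx hy px py =>
    have h : g * (x * y) * g⁻¹ = (g * x * g⁻¹) * (g * y * g⁻¹) := by group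
    rw [h]; exact mul_mem px py
  | inv x hx px =>
    have h : g * x⁻¹ * g⁻¹ = (g * x * g⁻¹)⁻¹ := by group
    rw [h]; exact inv_mem px

lemma centralizer_closure_comm {S : Set G} {x : G} (hx : x ∈ centralizer S) :
    ∀ a ∈ closure S, Commute x a := by
  intro a ha
  induction ha using closure_induction with
  | mem y hy => exact (mem_centralizer_iff.mp hx y hy).symm
  | one => exact Commute.one_right x
  | mul y z _ _ py pz => exact py.mul_right pz
  | inv y _ py => exact py.inv_right

lemma finite_quotient_centralizer {S : Set G} (hS : S.Finite)
    (hconj : ∀ s ∈ S, ∀ g : G, g * s * g⁻¹ ∈ S) :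
    Finite (G ⧸ centralizer S) := by
  haveI := hS.to_subtype
  apply Finite.of_injective
    (fun q : G ⧸ centralizer S => fun s : S => (⟨q.out * s * q.out⁻¹, hconj s s.2 q.out⟩ : S))
  intro q1 q2 h
  have h' : ∀ s ∈ S, q1.out * s * q1.out⁻¹ = q2.out * s * q2.out⁻¹ := by
    intro s hs
    have := congrFun h ⟨s, hs⟩
    exact Subtype.ext_iff.mp this
  have hmem : q1.out⁻¹ * q2.out ∈ centralizer S := by
    rw [mem_centralizer_iff]
    intro s hs
    calc s * (q1.out⁻¹ * q2.out) = q1.out⁻¹ * (q1.out * s * q1.out⁻¹) * q2.out := by group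
      _ = q1.out⁻¹ * (q2.out * s * q2.out⁻¹) * q2.out := by rw [h' s hs]
      _ = (q1.out⁻¹ * q2.out) * s := by group
  calc q1 = QuotientGroup.mk q1.out := (QuotientGroup.out_eq' q1).symm
    _ = QuotientGroup.mk q2.out := QuotientGroup.eq.mpr hmem
    _ = q2 := QuotientGroup.out_eq' q2

lemma iterComm_normal (H : Subgroup G) [hn : H.Normal] : ∀ i, (iterComm H i).Normal
  | 0 => hn
  | i + 1 => by
    haveI := iterComm_normal H i
    exact Subgroup.commutator_normal _ _

lemma iterComm_le_self (H : Subgroup G) [hn : H.Normal] : ∀ i, iterComm H i ≤ H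
  | 0 => le_rfl
  | i + 1 => by
    show ⁅iterComm H i, ⊤⁆ ≤ H
    rw [commutator_le]
    intro h hh g _
    have h1 : ⁅h, g⁆ = h * (g * h⁻¹ * g⁻¹) := by group
    rw [h1]
    exact mul_mem (iterComm_le_self H i hh) (hn.conj_mem _ (inv_mem (iterComm_le_self H i hh)) g)

lemma map_iterComm {H' : Type*} [Group H'] (f : G →* H') (hf : Function.Surjective f)
    (H : Subgroup G) : ∀ i, (iterComm H i).map f = iterComm (H.map f) i
  | 0 => rfl
  | i + 1 => by
    show map f ⁅iterComm H i, ⊤⁆ = ⁅iterComm (map f H) i, ⊤⁆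
    rw [map_commutator, map_iterComm f hf H i, ← MonoidHom.range_eq_map,
      MonoidHom.range_eq_top.mpr hf]

lemma wordValues_conj {k : ℕ} (w : FreeGroup (Fin k)) (s : G) (hs : s ∈ wordValues w G)
    (x : G) : x * s * x⁻¹ ∈ wordValues w G := by
  obtain ⟨g, rfl⟩ := hs
  refine ⟨fun i => x * g i * x⁻¹, ?_⟩
  have h : FreeGroup.lift (fun i => x * g i * x⁻¹)
      = (MulAut.conj x).toMonoidHom.comp (FreeGroup.lift g) := by
    apply FreeGroup.ext_hom
    intro a
    simp
  show FreeGroup.lift (fun i => x * g i * x⁻¹) w = x * FreeGroup.lift g w * x⁻¹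
  rw [h]
  simp

lemma wordValues_map {k : ℕ} (w : FreeGroup (Fin k)) {H' : Type*} [Group H'] (f : G →* H')
    (hf : Function.Surjective f) : wordValues w H' = f '' wordValues w G := by
  ext y
  constructor
  · rintro ⟨g, rfl⟩
    choose g' hg' using fun i => hf (g i)
    refine ⟨FreeGroup.lift g' w, ⟨g', rfl⟩, ?_⟩
    have h : f.comp (FreeGroup.lift g') = FreeGroup.lift g := by
      apply FreeGroup.ext_hom
      intro a
      simp [hg']
    show f (FreeGroup.lift g' w) = FreeGroup.lift g w
    rw [← h]
    rfl
  · rintro ⟨_, ⟨g, rfl⟩, rfl⟩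
    refine ⟨fun i => f (g i), ?_⟩
    have h : FreeGroup.lift (fun i => f (g i)) = f.comp (FreeGroup.lift g) := by
      apply FreeGroup.ext_hom
      intro a
      simp
    show FreeGroup.lift (fun i => f (g i)) w = f (FreeGroup.lift g w)
    rw [h]
    rfl

lemma finite_closure_central_torsion (F : Set G) (hF : F.Finite) :
    F ⊆ (center G : Set G) → (∀ f ∈ F, IsOfFinOrder f) →
    ((closure F : Subgroup G) : Set G).Finite := by
  refine Set.Finite.induction_on (motive := fun F _ => F ⊆ (center G : Set G) →
    (∀ f ∈ F, IsOfFinOrder f) → ((closure F : Subgroup G) : Set G).Finite) F hF ?_ ?_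
  · intro _ _
    rw [Subgroup.closure_empty]
    simp
  · rintro a s _ _ IH hc ht
    rw [Set.insert_eq, Subgroup.closure_union, ← zpowers_eq_closure]
    have hle : closure s ≤ center G :=
      (closure_le _).mpr fun x hx => hc (Set.mem_insert_of_mem a hx)
    haveI := normal_of_le_center hle
    rw [mul_normal]
    exact Set.Finite.mul (finite_zpowers.mpr (ht a (Set.mem_insert a s)))
      (IH (fun x hx => hc (Set.mem_insert_of_mem a hx))
        (fun x hx => ht x (Set.mem_insert_of_mem a hx)))

lemma finite_of_ker_range {A B : Type*} [Group A] [Group B] (f : A →* B)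
    (h1 : Finite f.ker) (h2 : Finite f.range) : Finite A := by
  haveI : Finite (A ⧸ f.ker) :=
    Finite.of_equiv _ (QuotientGroup.quotientKerEquivRange f).symm.toEquiv
  exact Finite.of_equiv _ (Subgroup.groupEquivQuotientProdSubgroup (s := f.ker)).symm

lemma commutator_mul_center {H : Type*} [Group H] (x y : H) {z z' : H}
    (hz : z ∈ center H) (hz' : z' ∈ center H) : ⁅x * z, y * z'⁆ = ⁅x, y⁆ := by
  have hcz : ∀ u : H, z * u * z⁻¹ = u := fun u => by
    rw [← mem_center_iff.mp hz u, mul_assoc, mul_inv_cancel, mul_one]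
  have hcz' : ∀ u : H, z' * u * z'⁻¹ = u := fun u => by
    rw [← mem_center_iff.mp hz' u, mul_assoc, mul_inv_cancel, mul_one]
  calc ⁅x * z, y * z'⁆ = x * (z * (y * z') * z⁻¹) * x⁻¹ * (y * z')⁻¹ := by group
    _ = x * (y * z') * x⁻¹ * (y * z')⁻¹ := by rw [hcz (y * z')]
    _ = x * y * (z' * x⁻¹ * z'⁻¹) * y⁻¹ := by group
    _ = x * y * x⁻¹ * y⁻¹ := by rw [hcz' x⁻¹]
    _ = ⁅x, y⁆ := rfl

lemma core (S : Set G) (hS : S.Finite)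
    (hconj : ∀ s ∈ S, ∀ g : G, g * s * g⁻¹ ∈ S)
    (hab : ∀ a ∈ closure S, ∀ b ∈ closure S, a * b = b * a)
    (n : ℕ) (hn : 2 ≤ n)
    (hbot : iterComm (closure S) n = ⊥) :
    Finite (iterComm (closure S) (n - 1)) := by
  classical
  set V := closure S with hV
  haveI hVn : V.Normal := closure_normal_of_conj hconj
  set C := centralizer S with hCdef
  haveI hGC : Finite (G ⧸ C) := finite_quotient_centralizer hS hconj
  have hCV : ∀ x ∈ C, ∀ a ∈ V, Commute x a := fun x hx => centralizer_closure_comm hx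
  -- the recursively defined finite generating sets
  let F : ℕ → Set G := fun i =>
    Nat.rec S (fun _ Fi => Set.image2 (fun f (q : G ⧸ C) => ⁅f, q.out⁆) Fi Set.univ) i
  have hFsucc : ∀ i, F (i + 1) = Set.image2 (fun f (q : G ⧸ C) => ⁅f, q.out⁆) (F i) Set.univ :=
    fun _ => rfl
  have hFfin : ∀ i, (F i).Finite := by
    intro i
    induction i with
    | zero => exact hS
    | succ i ih => exact Set.Finite.image2 _ ih Set.finite_univ
  have hFW : ∀ i, F i ⊆ (iterComm V i : Set G) := by
    intro i
    induction i with
    | zero => exact subset_closure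
    | succ i ih =>
      rw [hFsucc]
      rintro x ⟨f, hf, q, -, rfl⟩
      exact commutator_mem_commutator (ih hf) (mem_top _)
  have hFV : ∀ i, F i ⊆ (V : Set G) := fun i x hx => iterComm_le_self V i (hFW i hx)
  -- decomposition of group elements along the transversal of C
  have hkey : ∀ f ∈ V, ∀ g : G, ⁅f, g⁆ = ⁅f, (QuotientGroup.mk g : G ⧸ C).out⁆ := by
    intro f hf g
    obtain ⟨x, hx⟩ := QuotientGroup.mk_out_eq_mul C g
    have hg : g = (QuotientGroup.mk g : G ⧸ C).out * (x : G)⁻¹ := by rw [hx]; group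
    have hc2 : (x : G)⁻¹ * f⁻¹ = f⁻¹ * (x : G)⁻¹ :=
      ((hCV x x.2 f hf).inv_left.inv_right).eq
    set t := (QuotientGroup.mk g : G ⧸ C).out
    calc ⁅f, g⁆ = ⁅f, t * (x : G)⁻¹⁆ := by rw [← hg]
      _ = f * t * ((x : G)⁻¹ * f⁻¹ * ((x : G)⁻¹)⁻¹) * t⁻¹ := by group
      _ = f * t * (f⁻¹ * (x : G)⁻¹ * ((x : G)⁻¹)⁻¹) * t⁻¹ := by rw [hc2]
      _ = ⁅f, t⁆ := by group
  -- auxiliary membership facts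
  have hbrack_mem : ∀ b ∈ V, ∀ g : G, ⁅b, g⁆ ∈ V := by
    intro b hb g
    have h1 : ⁅b, g⁆ = b * (g * b⁻¹ * g⁻¹) := by group
    rw [h1]
    exact mul_mem hb (hVn.conj_mem _ (inv_mem hb) g)
  have hVcomm : ∀ a ∈ V, ∀ b ∈ V, a * b * a⁻¹ = b := by
    intro a ha b hb
    rw [hab a ha b hb, mul_assoc, mul_inv_cancel, mul_one]
  -- main claim: iterComm V i is the normal closure of F i
  have hmain : ∀ i, iterComm V i = Subgroup.normalClosure (F i) := by
    intro i
    induction i with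
    | zero =>
      show V = Subgroup.normalClosure S
      exact le_antisymm closure_le_normalClosure (normalClosure_le_normal subset_closure)
    | succ i ih =>
      haveI hMnormal : (Subgroup.normalClosure (F (i + 1))).Normal := normalClosure_normal
      apply le_antisymm
      · -- define the subgroup K
        set M := Subgroup.normalClosure (F (i + 1)) with hMdef
        let K : Subgroup G :=
          { carrier := {h : G | h ∈ V ∧ ∀ g : G, ⁅h, g⁆ ∈ M}
            one_mem' := ⟨one_mem _, fun g => by
              have h1 : ⁅(1 : G), g⁆ = 1 := by group
              rw [h1]; exact one_mem _⟩
            mul_mem' := by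
              rintro a b ⟨haV, haM⟩ ⟨hbV, hbM⟩
              refine ⟨mul_mem haV hbV, fun g => ?_⟩
              have h1 : ⁅a * b, g⁆ = a * ⁅b, g⁆ * a⁻¹ * ⁅a, g⁆ := by group
              rw [h1, hVcomm a haV _ (hbrack_mem b hbV g)]
              exact mul_mem (hbM g) (haM g)
            inv_mem' := by
              rintro a ⟨haV, haM⟩
              refine ⟨inv_mem haV, fun g => ?_⟩
              have h1 : ⁅a⁻¹, g⁆ = a⁻¹ * ⁅a, g⁆⁻¹ * (a⁻¹)⁻¹ := by group
              rw [h1, hVcomm a⁻¹ (inv_mem haV) _ (inv_mem (hbrack_mem a haV g))]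
              exact inv_mem (haM g) }
        haveI hKnormal : K.Normal := by
          constructor
          rintro h ⟨hhV, hhM⟩ g
          refine ⟨hVn.conj_mem h hhV g, fun g' => ?_⟩
          have h1 : ⁅g * h * g⁻¹, g'⁆ = g * ⁅h, g⁻¹ * g' * g⁆ * g⁻¹ := by group
          rw [h1]
          exact hMnormal.conj_mem _ (hhM _) g
        have hFK : F i ⊆ (K : Set G) := by
          intro f hf
          refine ⟨hFV i hf, fun g => ?_⟩
          rw [hkey f (hFV i hf) g]
          exact subset_normalClosure
            (Set.mem_image2_of_mem hf (Set.mem_univ (QuotientGroup.mk g)))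
        have hNK : Subgroup.normalClosure (F i) ≤ K := normalClosure_le_normal hFK
        show ⁅iterComm V i, ⊤⁆ ≤ M
        rw [ih, commutator_le]
        intro h hh g _
        exact (hNK hh).2 g
      · haveI : (⁅iterComm V i, (⊤ : Subgroup G)⁆).Normal := by
          haveI := iterComm_normal V i
          exact Subgroup.commutator_normal _ _
        show Subgroup.normalClosure (F (i + 1)) ≤ ⁅iterComm V i, (⊤ : Subgroup G)⁆
        apply normalClosure_le_normal
        rw [hFsucc]
        rintro x ⟨f, hf, q, -, rfl⟩
        exact commutator_mem_commutator (hFW i hf) (mem_top _)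
  -- conclude
  obtain ⟨m, hm⟩ : ∃ m, n - 1 = m + 1 := ⟨n - 2, by omega⟩
  have hnm : n = (m + 1) + 1 := by omega
  have hcent : ∀ u ∈ iterComm V (m + 1), u ∈ center G := by
    intro u hu
    rw [mem_center_iff]
    intro g
    have h1 : ⁅u, g⁆ ∈ iterComm V n := by
      rw [hnm]
      exact commutator_mem_commutator hu (mem_top g)
    rw [hbot] at h1
    have h2 : ⁅u, g⁆ = 1 := h1
    exact (commutatorElement_eq_one_iff_mul_comm.mp h2).symm
  have htor : ∀ f ∈ F (m + 1), IsOfFinOrder f := by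
    intro f hf
    rw [hFsucc] at hf
    obtain ⟨c, hc, q, -, rfl⟩ := hf
    have hcV : c ∈ V := hFV m hc
    have hcW : c ∈ iterComm V m := hFW m hc
    have hpsi : ∀ g h : G, ⁅c, g * h⁆ = ⁅c, g⁆ * ⁅c, h⁆ := by
      intro g h
      have h1 : ⁅c, g * h⁆ = ⁅c, g⁆ * (g * ⁅c, h⁆ * g⁻¹) := by group
      have h2 : ⁅c, h⁆ ∈ center G := by
        apply hcent
        show ⁅c, h⁆ ∈ ⁅iterComm V m, ⊤⁆
        exact commutator_mem_commutator hcW (mem_top h)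
      rw [h1, conj_center h2 g]
    have hpow : ∀ j : ℕ, ⁅c, q.out⁆ ^ j = ⁅c, q.out ^ j⁆ := by
      intro j
      induction j with
      | zero =>
        have h1 : ⁅c, (1 : G)⁆ = 1 := by group
        simp [h1]
      | succ j ih => rw [pow_succ, pow_succ, ih, hpsi]
    have hmem : ∀ j : ℕ, ⁅c, q.out⁆ ^ j ∈ (fun q' : G ⧸ C => ⁅c, q'.out⁆) '' Set.univ := by
      intro j
      rw [hpow j, hkey c hcV (q.out ^ j)]
      exact Set.mem_image_of_mem _ (Set.mem_univ _)
    have hfin' : ((fun q' : G ⧸ C => ⁅c, q'.out⁆) '' Set.univ).Finite :=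
      Set.Finite.image _ Set.finite_univ
    haveI := hfin'.to_subtype
    obtain ⟨i, j, hij, hEq⟩ := Finite.exists_ne_map_eq_of_infinite
      (fun j : ℕ => (⟨⁅c, q.out⁆ ^ j, hmem j⟩ : {x // x ∈ (fun q' : G ⧸ C => ⁅c, q'.out⁆) '' Set.univ}))
    have hEq' : ⁅c, q.out⁆ ^ i = ⁅c, q.out⁆ ^ j := Subtype.ext_iff.mp hEq
    rcases lt_or_gt_of_ne hij with h | h
    · exact isOfFinOrder_of_pow_eq h hEq'
    · exact isOfFinOrder_of_pow_eq h hEq'.symm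
  have hsubcen : F (m + 1) ⊆ (center G : Set G) := fun f hf => hcent f (hFW (m + 1) hf)
  have hclosfin := finite_closure_central_torsion (F (m + 1)) (hFfin (m + 1)) hsubcen htor
  have hncl : Subgroup.normalClosure (F (m + 1)) = closure (F (m + 1)) := by
    haveI : (closure (F (m + 1))).Normal := normal_of_le_center ((closure_le _).mpr hsubcen)
    exact le_antisymm (normalClosure_le_normal subset_closure) closure_le_normalClosure
  rw [hm, hmain (m + 1), hncl]
  exact hclosfin.to_subtype

end IterCommAux

theorem iterComm_finite_step {k : ℕ} {G : Type*} [Group G]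
    (w : FreeGroup (Fin k)) (hw : (wordValues w G).Finite) (n : ℕ) (hn : 2 ≤ n)
    (hfin : Finite (iterComm (Subgroup.closure (wordValues w G)) n)) :
    Finite (iterComm (Subgroup.closure (wordValues w G)) (n - 1)) := by
  classical
  set S := wordValues w G with hSdef
  set V := Subgroup.closure S with hVdef
  have hconj : ∀ s ∈ S, ∀ g : G, g * s * g⁻¹ ∈ S :=
    fun s hs g => IterCommAux.wordValues_conj w s hs g
  haveI hVn : V.Normal := IterCommAux.closure_normal_of_conj hconj
  haveI hGC : Finite (G ⧸ Subgroup.centralizer S) :=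
    IterCommAux.finite_quotient_centralizer hw hconj
  have hCV : ∀ x ∈ Subgroup.centralizer S, ∀ a ∈ V, Commute x a :=
    fun x hx => IterCommAux.centralizer_closure_comm hx
  set Z : Subgroup ↥V := (Subgroup.centralizer S).subgroupOf V with hZdef
  have hZcen : Z ≤ Subgroup.center ↥V := by
    rintro ⟨v, hv⟩ hz
    rw [Subgroup.mem_center_iff]
    rintro ⟨u, hu⟩
    exact Subtype.ext ((hCV v (Subgroup.mem_subgroupOf.mp hz) u hu).eq.symm)
  haveI hQZfin : Finite (↥V ⧸ Z) := by
    apply Finite.of_injective (fun q : ↥V ⧸ Z =>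
      (QuotientGroup.mk ((q.out : ↥V) : G) : G ⧸ Subgroup.centralizer S))
    intro q1 q2 h
    have h1 : ((q1.out : ↥V) : G)⁻¹ * ((q2.out : ↥V) : G) ∈ Subgroup.centralizer S :=
      QuotientGroup.eq.mp h
    have h2 : (q1.out)⁻¹ * q2.out ∈ Z := Subgroup.mem_subgroupOf.mpr h1
    calc q1 = QuotientGroup.mk q1.out := (QuotientGroup.out_eq' q1).symm
      _ = QuotientGroup.mk q2.out := QuotientGroup.eq.mpr h2
      _ = q2 := QuotientGroup.out_eq' q2
  haveI hcsetfin : Finite (commutatorSet ↥V) := by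
    have hsub : commutatorSet ↥V ⊆
        Set.range (fun p : (↥V ⧸ Z) × (↥V ⧸ Z) => ⁅p.1.out, p.2.out⁆) := by
      rintro x ⟨a, b, rfl⟩
      obtain ⟨za, hza⟩ := QuotientGroup.mk_out_eq_mul Z a
      obtain ⟨zb, hzb⟩ := QuotientGroup.mk_out_eq_mul Z b
      refine ⟨(QuotientGroup.mk a, QuotientGroup.mk b), ?_⟩
      show ⁅(QuotientGroup.mk a : ↥V ⧸ Z).out, (QuotientGroup.mk b : ↥V ⧸ Z).out⁆ = ⁅a, b⁆
      rw [hza, hzb]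
      exact IterCommAux.commutator_mul_center a b (hZcen za.2) (hZcen zb.2)
    exact ((Set.finite_range _).subset hsub).to_subtype
  have hVVfin : ((⁅V, V⁆ : Subgroup G) : Set G).Finite := by
    have hmapeq : ⁅V, V⁆ = Subgroup.map V.subtype ⁅(⊤ : Subgroup ↥V), ⊤⁆ := by
      rw [Subgroup.map_commutator, ← MonoidHom.range_eq_map, Subgroup.range_subtype]
    have h2 : ((⁅(⊤ : Subgroup ↥V), ⊤⁆ : Subgroup ↥V) : Set ↥V).Finite := by
      rw [← commutator_def]
      have hc : Finite (commutator ↥V) := inferInstance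
      exact Set.finite_coe_iff.mp hc
    rw [hmapeq, Subgroup.coe_map]
    exact h2.image _
  haveI : (iterComm V n).Normal := IterCommAux.iterComm_normal V n
  haveI : (⁅V, V⁆).Normal := Subgroup.commutator_normal V V
  set K := ⁅V, V⁆ ⊔ iterComm V n with hKdef
  haveI hKnorm : K.Normal := Subgroup.sup_normal _ _
  have hKfin : ((K : Subgroup G) : Set G).Finite := by
    rw [hKdef, Subgroup.mul_normal]
    exact hVVfin.mul (Set.toFinite _)
  haveI hKfin' : Finite ↥K := hKfin.to_subtype
  set π := QuotientGroup.mk' K with hπdef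
  have hπ : Function.Surjective π := QuotientGroup.mk'_surjective K
  have hSQ : wordValues w (G ⧸ K) = π '' S := IterCommAux.wordValues_map w π hπ
  have hVQ : Subgroup.closure (wordValues w (G ⧸ K)) = Subgroup.map π V := by
    rw [hSQ, ← MonoidHom.map_closure]
  have hcore : Finite (iterComm (Subgroup.closure (wordValues w (G ⧸ K))) (n - 1)) := by
    apply IterCommAux.core _ (by rw [hSQ]; exact hw.image _)
      (fun s hs g => IterCommAux.wordValues_conj w s hs g) ?_ n hn ?_
    · intro a ha b hb
      rw [hVQ] at ha hb
      obtain ⟨a', ha', rfl⟩ := ha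
      obtain ⟨b', hb', rfl⟩ := hb
      have hmem : (a' * b')⁻¹ * (b' * a') ∈ K := by
        have he : (a' * b')⁻¹ * (b' * a') = ⁅b'⁻¹, a'⁻¹⁆ := by group
        rw [he]
        exact (le_sup_left : ⁅V, V⁆ ≤ K)
          (Subgroup.commutator_mem_commutator (inv_mem hb') (inv_mem ha'))
      calc π a' * π b' = π (a' * b') := (map_mul π a' b').symm
        _ = π (b' * a') := QuotientGroup.eq.mpr hmem
        _ = π b' * π a' := map_mul π b' a'
    · rw [hVQ, ← IterCommAux.map_iterComm π hπ V n, Subgroup.map_eq_bot_iff,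
        QuotientGroup.ker_mk']
      exact le_sup_right
  set A := iterComm V (n - 1) with hAdef
  set ρ := π.comp A.subtype with hρdef
  have hkermem : ∀ x : ρ.ker, ((x : ↥A) : G) ∈ K := by
    intro x
    have hx : ρ (x : ↥A) = 1 := x.2
    have hx2 : π ((x : ↥A) : G) = 1 := hx
    exact (QuotientGroup.eq_one_iff _).mp hx2
  have hker : Finite ρ.ker := by
    apply Finite.of_injective (fun x : ρ.ker => (⟨((x : ↥A) : G), hkermem x⟩ : ↥K))
    intro x y hxy
    have h3 : ((x : ↥A) : G) = ((y : ↥A) : G) := by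
      have := congrArg (fun z : ↥K => (z : G)) hxy
      simpa using this
    exact Subtype.ext (Subtype.ext h3)
  have hrange : Finite ρ.range := by
    have h1 : ρ.range = Subgroup.map π A := by
      rw [hρdef, MonoidHom.range_comp, Subgroup.range_subtype]
    have h2 : Subgroup.map π A = iterComm (Subgroup.closure (wordValues w (G ⧸ K))) (n - 1) := by
      rw [hVQ, hAdef, IterCommAux.map_iterComm π hπ V]
    rw [h1, h2]
    exact hcore
  exact IterCommAux.finite_of_ker_range ρ hker hrange
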